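/- (Acyclicity of the Fedosov differential in positive degrees.) Let D = ∇ − δ + A· be a nilpotent Fedosov derivation (D² = 0, with A of y-degree ≥ 2 and δ^{-1}A = 0). If q ≥ 1 and a ∈ Ω^q satisfies Da = 0, then there exists b ∈ Ω^{q−1} with Db = a; moreover b can be taken to be the solution of the recursion b = −δ^{-1}a + δ^{-1}(∇b + A·b), which satisfies δ^{-1}b = 0 and σ(b) = 0. -/

import Mathlib

/-!
Coordinate model of the Fedosov resolution on `M = ℝ^d`, following Dolgushev,
"Covariant and equivariant formality theorems".

An element `a : Omega d` represents the exterior form with values in the formally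
completed symmetric algebra of the cotangent bundle,
`a = ∑ a_{m,S}(x) y^m dx^S`, where `m` is the multi-index of exponents of the
commuting formal fibre variables `y^1, …, y^d` and `S` is the (increasingly
ordered) set of indices of the anticommuting `dx`'s; `a m S : (Fin d → ℝ) → ℝ`
is the corresponding (smooth) coefficient.
-/

noncomputable section
open scoped BigOperators

namespace FedosovModel

/-- Multi-indices: exponents of the formal fibre variables `y`. -/
abbrev Mi (d : ℕ) := Fin d →₀ ℕ

/-- The coordinate model of `Ω(ℝ^d, 𝒮M)`: `a m S x` is the coefficient of the
monomial `y^m dx^S` (with the `dx`'s in increasing order) at the point `x`. -/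
abbrev Omega (d : ℕ) := Mi d → Finset (Fin d) → (Fin d → ℝ) → ℝ

variable (d : ℕ)

/-- total `y`-degree of a multi-index -/
def ydeg (m : Mi d) : ℕ := ∑ i, m i

/-- all coefficients are smooth functions on `ℝ^d` -/
def Smooth (a : Omega d) : Prop := ∀ m S, ContDiff ℝ (⊤ : ℕ∞) (a m S)

/-- `a` is homogeneous of exterior degree `q`, i.e. `a ∈ Ω^q` -/
def ExtDeg (q : ℕ) (a : Omega d) : Prop := ∀ m S, S.card ≠ q → a m S = 0

/-- the sign defined by `dx^i ∧ dx^S = sgn i S • dx^{S ∪ {i}}` for `i ∉ S` -/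
def sgn (i : Fin d) (S : Finset (Fin d)) : ℝ :=
  (-1 : ℝ) ^ (S.filter (fun j => j < i)).card

/-- the projection `σ(a) = a|_{y = dx = 0}` -/
def sigmaOm (a : Omega d) : (Fin d → ℝ) → ℝ := a 0 ∅

/-- a function on `ℝ^d` viewed as an element of `Ω` with no `y`- and `dx`-dependence -/
def ofFun (f : (Fin d → ℝ) → ℝ) : Omega d :=
  fun m S => if m = 0 ∧ S = ∅ then f else 0

/-- the differential `δ = dx^i ∂/∂y^i` -/
def deltaOp (a : Omega d) : Omega d := fun m S x =>
  ∑ i ∈ S, sgn d i (S.erase i) * ((m i : ℝ) + 1) *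
    a (m + Finsupp.single i 1) (S.erase i) x

/-- the homotopy operator `δ⁻¹`, acting on a component of `y`-degree `p` and
exterior degree `q` with `p + q > 0` as `(p+q)⁻¹ y^k ι(∂/∂x^k)`, and as `0`
on the component `p = q = 0`. -/
def deltaInv (a : Omega d) : Omega d := fun m S x =>
  (((ydeg d m + S.card : ℕ) : ℝ))⁻¹ *
    ∑ k : Fin d,
      if k ∉ S ∧ 1 ≤ m k then sgn d k S * a (m - Finsupp.single k 1) (insert k S) x
      else 0

/-- partial derivative `∂f/∂x^i` -/
def pd (i : Fin d) (f : (Fin d → ℝ) → ℝ) : (Fin d → ℝ) → ℝ :=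
  fun x => fderiv ℝ f x (Pi.single i 1)

/-- Christoffel symbols: `Γ k i j = Γ^k_{ij}` -/
abbrev Christoffel (d : ℕ) := Fin d → Fin d → Fin d → (Fin d → ℝ) → ℝ

def SmoothGamma (Γ : Christoffel d) : Prop := ∀ k i j, ContDiff ℝ (⊤ : ℕ∞) (Γ k i j)

def TorsionFree (Γ : Christoffel d) : Prop := ∀ k i j, Γ k i j = Γ k j i

/-- the covariant derivative `∇a = dx^i ∂a/∂x^i − dx^i Γ^k_{ij}(x) y^j ∂a/∂y^k` -/
def nablaOp (Γ : Christoffel d) (a : Omega d) : Omega d := fun m S x =>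
  ∑ i ∈ S, sgn d i (S.erase i) *
    (pd d i (a m (S.erase i)) x -
      ∑ j : Fin d, ∑ k : Fin d,
        if 1 ≤ m j then
          let m' : Mi d := m + Finsupp.single k 1 - Finsupp.single j 1
          Γ k i j x * ((m' k : ℕ) : ℝ) * a m' (S.erase i) x
        else 0)

/-- the Riemann curvature tensor
`(R_{ij})^k_l = ∂_i Γ^k_{jl} − ∂_j Γ^k_{il} + Γ^k_{im} Γ^m_{jl} − Γ^k_{jm} Γ^m_{il}` -/
def Riem (Γ : Christoffel d) (i j k l : Fin d) : (Fin d → ℝ) → ℝ := fun x =>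
  pd d i (Γ k j l) x - pd d j (Γ k i l) x +
    ∑ mm : Fin d, (Γ k i mm x * Γ mm j l x - Γ k j mm x * Γ mm i l x)

/-- the curvature operator `R·a = −(1/2) dx^i dx^j (R_{ij})^k_l y^l ∂a/∂y^k` -/
def curvAct (Γ : Christoffel d) (a : Omega d) : Omega d := fun m S x =>
  -(1/2 : ℝ) * ∑ i ∈ S, ∑ j ∈ S.erase i,
    sgn d i (S.erase i) * sgn d j ((S.erase i).erase j) *
      ∑ k : Fin d, ∑ l : Fin d,
        if 1 ≤ m l then
          let m' : Mi d := m + Finsupp.single k 1 - Finsupp.single l 1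
          Riem d Γ i j k l x * ((m' k : ℕ) : ℝ) * a m' ((S.erase i).erase j) x
        else 0

/-! ### Fiberwise-vector-field-valued one-forms and the Fedosov differential -/

/-- a fiberwise-vector-field-valued one-form `B = dx^k B^j_k(x,y) ∂/∂y^j`:
`B j k m x` is the coefficient of `dx^k y^m ∂/∂y^j` -/
abbrev VF1 (d : ℕ) := Fin d → Fin d → Mi d → (Fin d → ℝ) → ℝ

def SmoothVF1 (A : VF1 d) : Prop := ∀ j k m, ContDiff ℝ (⊤ : ℕ∞) (A j k m)

/-- all terms of `A` have `y`-degree at least 2 -/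
def LowDegVanish (A : VF1 d) : Prop := ∀ j k m, ydeg d m < 2 → A j k m = 0

/-- the action of a fiberwise-vector-field-valued one-form on `Ω` as an odd
derivation: `A·a = dx^k A^j_k(x,y) ∂a/∂y^j` -/
def vact (A : VF1 d) (a : Omega d) : Omega d := fun m S x =>
  ∑ k ∈ S, sgn d k (S.erase k) *
    ∑ j : Fin d, ∑ p ∈ Finset.HasAntidiagonal.antidiagonal m,
      A j k p.1 x * ((p.2 j : ℝ) + 1) * a (p.2 + Finsupp.single j 1) (S.erase k) x

/-- the `∂/∂y^j`-component of a fiberwise-vector-field-valued one-form,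
as an element of `Ω` -/
def vf1ToOmega (A : VF1 d) (j : Fin d) : Omega d :=
  fun m S x => ∑ k : Fin d, if S = {k} then A j k m x else 0

/-- the connection one-form `Γ = −dx^i Γ^k_{ij}(x) y^j ∂/∂y^k` as a
fiberwise-vector-field-valued one-form -/
def GammaVF (Γ : Christoffel d) : VF1 d := fun jf kx m x =>
  -∑ l : Fin d, if m = Finsupp.single l 1 then Γ jf kx l x else 0

/-- the `∂/∂y^k`-component of the curvature
`R = −(1/2) dx^i dx^j (R_{ij})^k_l y^l ∂/∂y^k`, as an element of `Ω` -/
def RVForm (Γ : Christoffel d) (kf : Fin d) : Omega d := fun m S x =>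
  -(1/2 : ℝ) * ∑ i : Fin d, ∑ j : Fin d,
    (if S = {i, j} ∧ i < j then (1 : ℝ) else if S = {i, j} ∧ j < i then -1 else 0) *
      ∑ l : Fin d, if m = Finsupp.single l 1 then Riem d Γ i j kf l x else 0

/-- the normalization `δ⁻¹ A = 0` (componentwise in the fibre index) -/
def DeltaInvVanish (A : VF1 d) : Prop := ∀ j, deltaInv d (vf1ToOmega d A j) = 0

/-- the Fedosov derivation `D = ∇ − δ + A·` -/
def Dfed (Γ : Christoffel d) (A : VF1 d) (a : Omega d) : Omega d :=
  nablaOp d Γ a - deltaOp d a + vact d A a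

/-- nilpotency of the Fedosov derivation: `D ∘ D = 0` on `Ω` -/
def Nilpotent (Γ : Christoffel d) (A : VF1 d) : Prop :=
  ∀ a : Omega d, Smooth d a → Dfed d Γ A (Dfed d Γ A a) = 0

/-- the fixed-point equation `A = δ⁻¹R + δ⁻¹(∇A + (1/2)[A,A])`, componentwise in
the fibre index `j`; here `(∇A)^j = dx^i ∂_{x^i}(A^j) + Γ·(A^j) + A·(Γ^j)` and
`((1/2)[A,A])^j = A·(A^j) = dx^k dx^l A^m_k ∂A^j_l/∂y^m`. -/
def FedosovFixedPoint (Γ : Christoffel d) (A : VF1 d) : Prop :=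
  ∀ j, vf1ToOmega d A j =
    deltaInv d (RVForm d Γ j) +
      deltaInv d (nablaOp d Γ (vf1ToOmega d A j) +
        vact d A (vf1ToOmega d (GammaVF d Γ) j) +
        vact d A (vf1ToOmega d A j))

/-! ### The supercommutative product on `Ω` -/

/-- sign of `dx^S ∧ dx^T = shuffleSgn S T • dx^{S ∪ T}` for disjoint `S`, `T` -/
def shuffleSgn (S T : Finset (Fin d)) : ℝ :=
  (-1 : ℝ) ^ ∑ i ∈ S, (T.filter (fun j => j < i)).card

/-- the supercommutative product of `Ω` -/
def mulOm (a b : Omega d) : Omega d := fun m S x =>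
  ∑ T ∈ S.powerset, shuffleSgn d T (S \ T) *
    ∑ p ∈ Finset.HasAntidiagonal.antidiagonal m, a p.1 T x * b p.2 (S \ T) x

/-- `a` is the flat section of the Fedosov differential extending `a₀`:
`a ∈ Ω⁰`, `Da = 0`, `σ(a) = a₀`. -/
def IsFlatSection (Γ : Christoffel d) (A : VF1 d) (a₀ : (Fin d → ℝ) → ℝ)
    (a : Omega d) : Prop :=
  ExtDeg d 0 a ∧ Smooth d a ∧ Dfed d Γ A a = 0 ∧ sigmaOm d a = a₀
variable {d : ℕ}

lemma ydeg_zero : ydeg d 0 = 0 := by simp [ydeg]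

lemma ydeg_add (m n : Mi d) : ydeg d (m + n) = ydeg d m + ydeg d n := by
  simp [ydeg, Finsupp.add_apply, Finset.sum_add_distrib]

lemma ydeg_single (k : Fin d) : ydeg d (Finsupp.single k 1) = 1 := by
  simp [ydeg, Finsupp.single_apply]

lemma ydeg_eq_zero {m : Mi d} (h : ydeg d m = 0) (k : Fin d) : m k = 0 := by
  have := (Finset.sum_eq_zero_iff.1 h) k (Finset.mem_univ k)
  exact this

lemma mi_sub_single_add {m : Mi d} {k : Fin d} (h : 1 ≤ m k) :
    m - Finsupp.single k 1 + Finsupp.single k 1 = m := by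
  ext j
  simp only [Finsupp.add_apply, Finsupp.tsub_apply, Finsupp.single_apply]
  by_cases hj : k = j
  · subst hj; simp; omega
  · simp [hj]

lemma mi_add_sub_single (m : Mi d) (i : Fin d) :
    m + Finsupp.single i 1 - Finsupp.single i 1 = m := by
  ext j
  simp only [Finsupp.add_apply, Finsupp.tsub_apply, Finsupp.single_apply]
  omega

lemma mi_sub_add_comm {m : Mi d} {k : Fin d} (h : 1 ≤ m k) (i : Fin d) :
    m - Finsupp.single k 1 + Finsupp.single i 1 = m + Finsupp.single i 1 - Finsupp.single k 1 := by
  ext j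
  simp only [Finsupp.add_apply, Finsupp.tsub_apply, Finsupp.single_apply]
  by_cases h1 : k = j
  · subst h1; by_cases h2 : i = k <;> simp [h2] <;> omega
  · simp [h1]

lemma ydeg_sub_single {m : Mi d} {k : Fin d} (h : 1 ≤ m k) :
    ydeg d (m - Finsupp.single k 1) + 1 = ydeg d m := by
  conv_rhs => rw [← mi_sub_single_add h]
  rw [ydeg_add, ydeg_single]

lemma ydeg_pos {m : Mi d} {k : Fin d} (h : 1 ≤ m k) : 1 ≤ ydeg d m := by
  have := ydeg_sub_single h; omega

lemma sgn_mul_self (i : Fin d) (T : Finset (Fin d)) : sgn d i T * sgn d i T = 1 := by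
  rw [sgn, ← pow_add]
  exact Even.neg_one_pow ⟨_, rfl⟩

lemma sgn_insert {i : Fin d} {T : Finset (Fin d)} (h : i ∉ T) (k : Fin d) :
    sgn d k (insert i T) = (if i < k then -1 else 1) * sgn d k T := by
  rw [sgn, sgn, Finset.filter_insert]
  split
  · rw [Finset.card_insert_of_notMem (fun hmem => h (Finset.mem_filter.1 hmem).1), pow_succ]
    ring
  · rw [one_mul]

lemma erase_insert_ne {i k : Fin d} (h : i ≠ k) (S : Finset (Fin d)) :
    (insert k S).erase i = insert k (S.erase i) := by
  ext j; simp only [Finset.mem_erase, Finset.mem_insert]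
  constructor
  · rintro ⟨hji, hj | hj⟩
    · exact Or.inl hj
    · exact Or.inr ⟨hji, hj⟩
  · rintro (hj | ⟨hji, hj⟩)
    · exact ⟨fun hh => h (hh ▸ hj ▸ rfl), Or.inl hj⟩
    · exact ⟨hji, Or.inr hj⟩
lemma deltaInv_add (u v : Omega d) : deltaInv d (u + v) = deltaInv d u + deltaInv d v := by
  funext m S x
  simp only [deltaInv, Pi.add_apply, ← mul_add, ← Finset.sum_add_distrib]
  congr 1
  refine Finset.sum_congr rfl fun k _ => ?_
  split <;> ring

lemma deltaInv_neg (u : Omega d) : deltaInv d (-u) = -deltaInv d u := by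
  funext m S x
  simp only [deltaInv, Pi.neg_apply, ← mul_neg, ← Finset.sum_neg_distrib]
  congr 1
  refine Finset.sum_congr rfl fun k _ => ?_
  split <;> ring

lemma deltaInv_sub (u v : Omega d) : deltaInv d (u - v) = deltaInv d u - deltaInv d v := by
  rw [sub_eq_add_neg, deltaInv_add, deltaInv_neg, sub_eq_add_neg]

lemma deltaInv_zero : deltaInv d (0 : Omega d) = 0 := by
  funext m S x
  simp [deltaInv]

lemma deltaOp_sub (u v : Omega d) : deltaOp d (u - v) = deltaOp d u - deltaOp d v := by
  funext m S x
  simp only [deltaOp, Pi.sub_apply, ← Finset.sum_sub_distrib]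
  exact Finset.sum_congr rfl fun i _ => by ring

lemma deltaOp_zero : deltaOp d (0 : Omega d) = 0 := by
  funext m S x
  simp [deltaOp]

lemma vact_sub (A : VF1 d) (u v : Omega d) :
    vact d A (u - v) = vact d A u - vact d A v := by
  funext m S x
  simp only [vact, Pi.sub_apply, ← Finset.sum_sub_distrib, ← mul_sub]

lemma vact_zero (A : VF1 d) : vact d A (0 : Omega d) = 0 := by
  funext m S x
  simp [vact]

lemma pd_zero (i : Fin d) : pd d i (0 : (Fin d → ℝ) → ℝ) = 0 := by
  funext x
  simp [pd, show (0 : (Fin d → ℝ) → ℝ) = fun _ => (0 : ℝ) from rfl]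

lemma pd_sub {f g : (Fin d → ℝ) → ℝ} (hf : Differentiable ℝ f) (hg : Differentiable ℝ g)
    (i : Fin d) (x : Fin d → ℝ) : pd d i (f - g) x = pd d i f x - pd d i g x := by
  simp only [pd]
  rw [show (f - g) = fun y => f y - g y from rfl, fderiv_fun_sub (hf x) (hg x)]
  simp

lemma nablaOp_zero (Γ : Christoffel d) : nablaOp d Γ (0 : Omega d) = 0 := by
  funext m S x
  simp [nablaOp, pd_zero]

lemma sum2_ite_sub (P : Fin d → Prop) [DecidablePred P] (C U V : Fin d → Fin d → ℝ) :
    (∑ j : Fin d, ∑ k : Fin d, if P j then C j k * (U j k - V j k) else 0)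
      = (∑ j : Fin d, ∑ k : Fin d, if P j then C j k * U j k else 0)
        - (∑ j : Fin d, ∑ k : Fin d, if P j then C j k * V j k else 0) := by
  rw [← Finset.sum_sub_distrib]
  refine Finset.sum_congr rfl fun j _ => ?_
  rw [← Finset.sum_sub_distrib]
  refine Finset.sum_congr rfl fun k _ => ?_
  split <;> ring

lemma nablaOp_sub (Γ : Christoffel d) {u v : Omega d}
    (hu : ∀ m S, Differentiable ℝ (u m S)) (hv : ∀ m S, Differentiable ℝ (v m S)) :
    nablaOp d Γ (u - v) = nablaOp d Γ u - nablaOp d Γ v := by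
  funext m S x
  simp only [nablaOp, Pi.sub_apply, ← Finset.sum_sub_distrib]
  refine Finset.sum_congr rfl fun i _ => ?_
  rw [pd_sub (hu _ _) (hv _ _)]
  rw [sum2_ite_sub]
  ring
lemma contDiff_pd {f : (Fin d → ℝ) → ℝ} (hf : ContDiff ℝ (⊤ : ℕ∞) f) (i : Fin d) :
    ContDiff ℝ (⊤ : ℕ∞) (pd d i f) :=
  (hf.fderiv_right (by exact_mod_cast (le_top : (⊤:ℕ∞)+1 ≤ ⊤))).clm_apply contDiff_const

lemma smooth_add {u v : Omega d} (hu : Smooth d u) (hv : Smooth d v) : Smooth d (u + v) :=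
  fun m S => (hu m S).add (hv m S)

lemma smooth_neg {u : Omega d} (hu : Smooth d u) : Smooth d (-u) :=
  fun m S => (hu m S).neg

lemma smooth_sub {u v : Omega d} (hu : Smooth d u) (hv : Smooth d v) : Smooth d (u - v) :=
  fun m S => (hu m S).sub (hv m S)

lemma smooth_deltaOp {u : Omega d} (hu : Smooth d u) : Smooth d (deltaOp d u) := by
  intro m S
  unfold deltaOp
  exact ContDiff.sum fun i _ => (contDiff_const.mul contDiff_const).mul (hu _ _)

lemma smooth_deltaInv {u : Omega d} (hu : Smooth d u) : Smooth d (deltaInv d u) := by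
  intro m S
  unfold deltaInv
  refine contDiff_const.mul (ContDiff.sum fun k _ => ?_)
  split_ifs
  · exact contDiff_const.mul (hu _ _)
  · exact contDiff_const

lemma smooth_vact {A : VF1 d} (hA : SmoothVF1 d A) {u : Omega d} (hu : Smooth d u) :
    Smooth d (vact d A u) := by
  intro m S
  unfold vact
  refine ContDiff.sum fun k _ => contDiff_const.mul (ContDiff.sum fun j _ =>
    ContDiff.sum fun p _ => ((hA _ _ _).mul contDiff_const).mul (hu _ _))

lemma smooth_nablaOp {Γ : Christoffel d} (hΓ : SmoothGamma d Γ) {u : Omega d}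
    (hu : Smooth d u) : Smooth d (nablaOp d Γ u) := by
  intro m S
  unfold nablaOp
  refine ContDiff.sum fun i _ => contDiff_const.mul (ContDiff.sub (contDiff_pd (hu _ _) i)
    (ContDiff.sum fun j _ => ContDiff.sum fun k _ => ?_))
  split_ifs
  · exact ((hΓ _ _ _).mul contDiff_const).mul (hu _ _)
  · exact contDiff_const

lemma smooth_Dfed {Γ : Christoffel d} (hΓ : SmoothGamma d Γ) {A : VF1 d}
    (hA : SmoothVF1 d A) {u : Omega d} (hu : Smooth d u) : Smooth d (Dfed d Γ A u) :=
  smooth_add (smooth_sub (smooth_nablaOp hΓ hu) (smooth_deltaOp hu)) (smooth_vact hA hu)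

lemma smooth_diff {u : Omega d} (hu : Smooth d u) (m : Mi d) (S : Finset (Fin d)) :
    Differentiable ℝ (u m S) := (hu m S).differentiable (by simp)
lemma deltaInv_ydeg_zero {m : Mi d} (h : ydeg d m = 0) (u : Omega d)
    (S : Finset (Fin d)) (x : Fin d → ℝ) : deltaInv d u m S x = 0 := by
  unfold deltaInv
  rw [Finset.sum_eq_zero, mul_zero]
  intro k _
  rw [if_neg]
  rintro ⟨-, hk⟩
  have := ydeg_eq_zero h k
  omega

lemma deltaInv_zero_empty (u : Omega d) (x : Fin d → ℝ) : deltaInv d u 0 ∅ x = 0 := by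
  unfold deltaInv
  rw [ydeg_zero]
  simp

lemma sign_cancel {i k : Fin d} {S : Finset (Fin d)} (hi : i ∈ S) (hk : k ∉ S) :
    sgn d i (S.erase i) * sgn d k (S.erase i) + sgn d k S * sgn d i (insert k (S.erase i)) = 0 := by
  have hik : i ≠ k := fun h => hk (h ▸ hi)
  have h1 : sgn d k S = (if i < k then -1 else 1) * sgn d k (S.erase i) := by
    conv_lhs => rw [← Finset.insert_erase hi]
    exact sgn_insert (Finset.notMem_erase i S) k
  have h2 : sgn d i (insert k (S.erase i)) = (if k < i then -1 else 1) * sgn d i (S.erase i) := by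
    exact sgn_insert (fun hmem => hk (Finset.mem_of_mem_erase hmem)) i
  rcases lt_trichotomy i k with h | h | h
  · rw [h1, h2, if_pos h, if_neg (not_lt.2 h.le)]; ring
  · exact absurd h hik
  · rw [h1, h2, if_neg (not_lt.2 h.le), if_pos h]; ring

lemma hodge (u : Omega d) (m : Mi d) (S : Finset (Fin d))
    (hN : 0 < ydeg d m + S.card) (x : Fin d → ℝ) :
    deltaOp d (deltaInv d u) m S x + deltaInv d (deltaOp d u) m S x = u m S x := by
  set N : ℕ := ydeg d m + S.card with hNdef
  have hNne : ((N : ℕ) : ℝ) ≠ 0 := Nat.cast_ne_zero.2 hN.ne'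
  -- Step 1 : the δδ⁻¹ term
  have key1 : ∀ i ∈ S, deltaInv d u (m + Finsupp.single i 1) (S.erase i) x
      = ((N : ℕ) : ℝ)⁻¹ * (sgn d i (S.erase i) * u m S x +
          ∑ k : Fin d, if k ∉ S ∧ 1 ≤ m k then
            sgn d k (S.erase i) *
              u (m + Finsupp.single i 1 - Finsupp.single k 1) (insert k (S.erase i)) x
          else 0) := by
    intro i hi
    unfold deltaInv
    have hNi : ydeg d (m + Finsupp.single i 1) + (S.erase i).card = N := by
      rw [ydeg_add, ydeg_single, Finset.card_erase_of_mem hi]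
      have : 1 ≤ S.card := Finset.card_pos.2 ⟨i, hi⟩
      omega
    rw [hNi]
    congr 1
    rw [← Finset.add_sum_erase _ _ (Finset.mem_univ i)]
    congr 1
    · have hpos : i ∉ S.erase i ∧ 1 ≤ (m + Finsupp.single i 1 : Mi d) i :=
        ⟨Finset.notMem_erase i S, by rw [Finsupp.add_apply, Finsupp.single_eq_same]; omega⟩
      rw [if_pos hpos, mi_add_sub_single, Finset.insert_erase hi]
    · conv_rhs => rw [← Finset.add_sum_erase _ _ (Finset.mem_univ i)]
      have hz : (if i ∉ S ∧ 1 ≤ m i then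
          sgn d i (S.erase i) *
            u (m + Finsupp.single i 1 - Finsupp.single i 1) (insert i (S.erase i)) x
          else 0) = 0 := if_neg (fun h => h.1 hi)
      rw [hz, zero_add]
      refine Finset.sum_congr rfl fun k hk => ?_
      have hne : k ≠ i := (Finset.mem_erase.1 hk).1
      have hg : (k ∉ S.erase i ∧ 1 ≤ (m + Finsupp.single i 1 : Mi d) k) ↔ (k ∉ S ∧ 1 ≤ m k) := by
        rw [Finset.mem_erase]
        simp only [Finsupp.add_apply, Finsupp.single_apply,
          if_neg (fun h : i = k => hne h.symm), add_zero]
        constructor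
        · rintro ⟨h1, h2⟩; exact ⟨fun hmem => h1 ⟨hne, hmem⟩, h2⟩
        · rintro ⟨h1, h2⟩; exact ⟨fun hmem => h1 hmem.2, h2⟩
      rw [if_congr hg rfl rfl]
  have h1 : deltaOp d (deltaInv d u) m S x
      = ((N : ℕ) : ℝ)⁻¹ * ∑ i ∈ S, (((m i : ℝ) + 1) * u m S x
          + ∑ k : Fin d, if k ∉ S ∧ 1 ≤ m k then
              sgn d i (S.erase i) * ((m i : ℝ) + 1) * sgn d k (S.erase i) *
                u (m + Finsupp.single i 1 - Finsupp.single k 1) (insert k (S.erase i)) x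
            else 0) := by
    unfold deltaOp
    rw [Finset.mul_sum]
    refine Finset.sum_congr rfl fun i hi => ?_
    rw [key1 i hi]
    have hdistr : (∑ k : Fin d, if k ∉ S ∧ 1 ≤ m k then
          sgn d i (S.erase i) * ((m i : ℝ) + 1) * sgn d k (S.erase i) *
            u (m + Finsupp.single i 1 - Finsupp.single k 1) (insert k (S.erase i)) x
        else 0)
        = sgn d i (S.erase i) * ((m i : ℝ) + 1) *
          ∑ k : Fin d, if k ∉ S ∧ 1 ≤ m k then
            sgn d k (S.erase i) *
              u (m + Finsupp.single i 1 - Finsupp.single k 1) (insert k (S.erase i)) x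
          else 0 := by
      rw [Finset.mul_sum]
      exact Finset.sum_congr rfl fun k _ => by split <;> ring
    rw [hdistr]
    have hs := sgn_mul_self (d := d) i (S.erase i)
    linear_combination (((N : ℕ) : ℝ))⁻¹ * ((m i : ℝ) + 1) * u m S x * hs
  -- Step 2 : the δ⁻¹δ term
  have key2 : ∀ k, k ∉ S → 1 ≤ m k → deltaOp d u (m - Finsupp.single k 1) (insert k S) x
      = sgn d k S * (m k : ℝ) * u m S x +
        ∑ i ∈ S, sgn d i (insert k (S.erase i)) * ((m i : ℝ) + 1) *
          u (m + Finsupp.single i 1 - Finsupp.single k 1) (insert k (S.erase i)) x := by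
    intro k hk hmk
    unfold deltaOp
    rw [Finset.sum_insert hk]
    congr 1
    · rw [Finset.erase_insert hk, mi_sub_single_add hmk]
      have hc : ((m - Finsupp.single k 1 : Mi d) k : ℕ) = m k - 1 := by
        rw [Finsupp.tsub_apply, Finsupp.single_eq_same]
      rw [hc]
      have : ((m k - 1 : ℕ) : ℝ) + 1 = (m k : ℝ) := by
        have := Nat.cast_sub hmk (R := ℝ)
        push_cast [this]; ring
      rw [this]
    · refine Finset.sum_congr rfl fun i hi => ?_
      have hik : i ≠ k := fun h => hk (h ▸ hi)
      rw [erase_insert_ne hik, mi_sub_add_comm hmk i]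
      have hmi : ((m - Finsupp.single k 1 : Mi d) i : ℕ) = m i := by
        rw [Finsupp.tsub_apply, Finsupp.single_apply, if_neg (fun h : k = i => hik h.symm)]
        omega
      rw [hmi]
  have h2 : deltaInv d (deltaOp d u) m S x
      = ((N : ℕ) : ℝ)⁻¹ * ∑ k : Fin d, ((if k ∉ S ∧ 1 ≤ m k then (m k : ℝ) else 0) * u m S x
          + ∑ i ∈ S, if k ∉ S ∧ 1 ≤ m k then
              sgn d k S * sgn d i (insert k (S.erase i)) * ((m i : ℝ) + 1) *
                u (m + Finsupp.single i 1 - Finsupp.single k 1) (insert k (S.erase i)) x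
            else 0) := by
    unfold deltaInv
    congr 1
    refine Finset.sum_congr rfl fun k _ => ?_
    by_cases hg : k ∉ S ∧ 1 ≤ m k
    · rw [if_pos hg, key2 k hg.1 hg.2, if_pos hg]
      rw [mul_add]
      congr 1
      · have hs := sgn_mul_self (d := d) k S
        linear_combination (m k : ℝ) * u m S x * hs
      · rw [Finset.mul_sum]
        refine Finset.sum_congr rfl fun i hi => ?_
        rw [if_pos hg]
        ring
    · rw [if_neg hg, if_neg hg, zero_mul, zero_add]
      rw [Finset.sum_eq_zero fun i _ => if_neg hg]
  -- Step 3 : assemble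
  rw [h1, h2]
  rw [← mul_add]
  have hsplit1 : (∑ i ∈ S, (((m i : ℝ) + 1) * u m S x
          + ∑ k : Fin d, if k ∉ S ∧ 1 ≤ m k then
              sgn d i (S.erase i) * ((m i : ℝ) + 1) * sgn d k (S.erase i) *
                u (m + Finsupp.single i 1 - Finsupp.single k 1) (insert k (S.erase i)) x
            else 0))
      = (∑ i ∈ S, ((m i : ℝ) + 1)) * u m S x
        + ∑ i ∈ S, ∑ k : Fin d, (if k ∉ S ∧ 1 ≤ m k then
            sgn d i (S.erase i) * ((m i : ℝ) + 1) * sgn d k (S.erase i) *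
              u (m + Finsupp.single i 1 - Finsupp.single k 1) (insert k (S.erase i)) x
          else 0) := by
    rw [Finset.sum_add_distrib, Finset.sum_mul]
  have hsplit2 : (∑ k : Fin d, ((if k ∉ S ∧ 1 ≤ m k then (m k : ℝ) else 0) * u m S x
          + ∑ i ∈ S, if k ∉ S ∧ 1 ≤ m k then
              sgn d k S * sgn d i (insert k (S.erase i)) * ((m i : ℝ) + 1) *
                u (m + Finsupp.single i 1 - Finsupp.single k 1) (insert k (S.erase i)) x
            else 0))
      = (∑ k : Fin d, if k ∉ S ∧ 1 ≤ m k then (m k : ℝ) else 0) * u m S x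
        + ∑ k : Fin d, ∑ i ∈ S, (if k ∉ S ∧ 1 ≤ m k then
            sgn d k S * sgn d i (insert k (S.erase i)) * ((m i : ℝ) + 1) *
              u (m + Finsupp.single i 1 - Finsupp.single k 1) (insert k (S.erase i)) x
          else 0) := by
    rw [Finset.sum_add_distrib, Finset.sum_mul]
  rw [hsplit1, hsplit2]
  have hcross : (∑ i ∈ S, ∑ k : Fin d, (if k ∉ S ∧ 1 ≤ m k then
            sgn d i (S.erase i) * ((m i : ℝ) + 1) * sgn d k (S.erase i) *
              u (m + Finsupp.single i 1 - Finsupp.single k 1) (insert k (S.erase i)) x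
          else 0))
      + (∑ k : Fin d, ∑ i ∈ S, (if k ∉ S ∧ 1 ≤ m k then
            sgn d k S * sgn d i (insert k (S.erase i)) * ((m i : ℝ) + 1) *
              u (m + Finsupp.single i 1 - Finsupp.single k 1) (insert k (S.erase i)) x
          else 0)) = 0 := by
    rw [Finset.sum_comm (s := Finset.univ) (t := S), ← Finset.sum_add_distrib]
    refine Finset.sum_eq_zero fun i hi => ?_
    rw [← Finset.sum_add_distrib]
    refine Finset.sum_eq_zero fun k _ => ?_
    by_cases hg : k ∉ S ∧ 1 ≤ m k
    · rw [if_pos hg, if_pos hg]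
      have hc := sign_cancel (d := d) hi hg.1
      linear_combination ((m i : ℝ) + 1) *
        u (m + Finsupp.single i 1 - Finsupp.single k 1) (insert k (S.erase i)) x * hc
    · rw [if_neg hg, if_neg hg, add_zero]
  have hdiag : (∑ i ∈ S, ((m i : ℝ) + 1))
      + (∑ k : Fin d, if k ∉ S ∧ 1 ≤ m k then (m k : ℝ) else 0) = ((N : ℕ) : ℝ) := by
    have e1 : (∑ k : Fin d, if k ∉ S ∧ 1 ≤ m k then (m k : ℝ) else 0)
        = ∑ k : Fin d, if k ∉ S then (m k : ℝ) else 0 := by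
      refine Finset.sum_congr rfl fun k _ => ?_
      by_cases h1 : k ∉ S
      · by_cases h2 : 1 ≤ m k
        · rw [if_pos ⟨h1, h2⟩, if_pos h1]
        · rw [if_neg (fun h => h2 h.2), if_pos h1]
          have : m k = 0 := by omega
          simp [this]
      · rw [if_neg (fun h => h1 h.1), if_neg h1]
    rw [e1]
    have e2 : (∑ k : Fin d, if k ∉ S then (m k : ℝ) else 0) = ∑ k ∈ Sᶜ, (m k : ℝ) := by
      rw [← Finset.sum_filter]
      congr 1
      ext k
      simp
    rw [e2]
    have e3 : (∑ i ∈ S, ((m i : ℝ) + 1)) = (∑ i ∈ S, (m i : ℝ)) + S.card := by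
      rw [Finset.sum_add_distrib, Finset.sum_const, nsmul_eq_mul, mul_one]
    rw [e3]
    have e4 : (∑ i ∈ S, (m i : ℝ)) + ∑ k ∈ Sᶜ, (m k : ℝ) = ∑ k : Fin d, (m k : ℝ) :=
      Finset.sum_add_sum_compl S _
    have e5 : ((N : ℕ) : ℝ) = (∑ k : Fin d, (m k : ℝ)) + S.card := by
      rw [hNdef]
      push_cast [ydeg]
      ring
    rw [e5]
    linarith [e4]
  have hinv : (((N : ℕ) : ℝ))⁻¹ * ((N : ℕ) : ℝ) = 1 := inv_mul_cancel₀ hNne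
  linear_combination (((N : ℕ) : ℝ))⁻¹ * hcross + (((N : ℕ) : ℝ))⁻¹ * u m S x * hdiag +
    u m S x * hinv
lemma sign_cancel' {k l : Fin d} {S : Finset (Fin d)} (hk : k ∉ S) (hl : l ∉ S)
    (hkl : l ≠ k) :
    sgn d k S * sgn d l (insert k S) + sgn d l S * sgn d k (insert l S) = 0 := by
  rw [sgn_insert hk l, sgn_insert hl k]
  rcases lt_trichotomy k l with h | h | h
  · rw [if_pos h, if_neg (not_lt.2 h.le)]; ring
  · exact absurd h.symm hkl
  · rw [if_neg (not_lt.2 h.le), if_pos h]; ring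

lemma deltaInv_deltaInv (u : Omega d) : deltaInv d (deltaInv d u) = 0 := by
  funext m S x
  show deltaInv d (deltaInv d u) m S x = 0
  set N : ℕ := ydeg d m + S.card with hNdef
  -- expand the outer deltaInv
  unfold deltaInv
  rw [show ydeg d m + S.card = N from rfl]
  have key : ∀ k : Fin d,
      (if k ∉ S ∧ 1 ≤ m k then
        sgn d k S * (((ydeg d (m - Finsupp.single k 1) + (insert k S).card : ℕ) : ℝ)⁻¹ *
          ∑ l : Fin d, if l ∉ insert k S ∧ 1 ≤ (m - Finsupp.single k 1 : Mi d) l then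
            sgn d l (insert k S) *
              u (m - Finsupp.single k 1 - Finsupp.single l 1) (insert l (insert k S)) x
          else 0)
      else 0)
      = ∑ l : Fin d, (if (k ∉ S ∧ 1 ≤ m k) ∧ (l ∉ S ∧ 1 ≤ m l) ∧ l ≠ k then
          ((N : ℕ) : ℝ)⁻¹ * sgn d k S * sgn d l (insert k S) *
            u (m - Finsupp.single k 1 - Finsupp.single l 1) (insert l (insert k S)) x
        else 0) := by
    intro k
    by_cases hg : k ∉ S ∧ 1 ≤ m k
    · rw [if_pos hg]
      have hM : ydeg d (m - Finsupp.single k 1) + (insert k S).card = N := by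
        rw [Finset.card_insert_of_notMem hg.1]
        have := ydeg_sub_single hg.2
        omega
      rw [hM, ← mul_assoc, Finset.mul_sum]
      refine Finset.sum_congr rfl fun l _ => ?_
      by_cases hgl : l ∉ insert k S ∧ 1 ≤ (m - Finsupp.single k 1 : Mi d) l
      · have hlk : l ≠ k := fun h => hgl.1 (h ▸ Finset.mem_insert_self k S)
        have hlS : l ∉ S := fun h => hgl.1 (Finset.mem_insert_of_mem h)
        have hml : 1 ≤ m l := by
          have := hgl.2
          rwa [Finsupp.tsub_apply, Finsupp.single_apply,
            if_neg (fun h : k = l => hlk h.symm), Nat.sub_zero] at this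
        rw [if_pos hgl, if_pos ⟨hg, ⟨hlS, hml⟩, hlk⟩]
        ring
      · rw [if_neg hgl, if_neg]
        · ring
        · rintro ⟨-, ⟨hlS, hml⟩, hlk⟩
          exact hgl ⟨fun hmem => (Finset.mem_insert.1 hmem).elim hlk hlS,
            by rw [Finsupp.tsub_apply, Finsupp.single_apply,
              if_neg (fun h : k = l => hlk h.symm)]; omega⟩
    · rw [if_neg hg]
      rw [Finset.sum_eq_zero fun l _ => if_neg (fun h => hg h.1)]
  rw [Finset.sum_congr rfl fun k _ => key k]
  have hanti : ∀ k l : Fin d,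
      (if (k ∉ S ∧ 1 ≤ m k) ∧ (l ∉ S ∧ 1 ≤ m l) ∧ l ≠ k then
          ((N : ℕ) : ℝ)⁻¹ * sgn d k S * sgn d l (insert k S) *
            u (m - Finsupp.single k 1 - Finsupp.single l 1) (insert l (insert k S)) x
        else 0)
      = -(if (l ∉ S ∧ 1 ≤ m l) ∧ (k ∉ S ∧ 1 ≤ m k) ∧ k ≠ l then
          ((N : ℕ) : ℝ)⁻¹ * sgn d l S * sgn d k (insert l S) *
            u (m - Finsupp.single l 1 - Finsupp.single k 1) (insert k (insert l S)) x
        else 0) := by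
    intro k l
    by_cases hg : (k ∉ S ∧ 1 ≤ m k) ∧ (l ∉ S ∧ 1 ≤ m l) ∧ l ≠ k
    · rw [if_pos hg, if_pos ⟨hg.2.1, hg.1, hg.2.2.symm⟩]
      have harg : m - Finsupp.single k 1 - Finsupp.single l 1
          = m - Finsupp.single l 1 - Finsupp.single k 1 := by
        rw [tsub_tsub, tsub_tsub, add_comm]
      have hset : insert l (insert k S) = insert k (insert l S) := Finset.insert_comm l k S
      rw [harg, hset]
      have hc := sign_cancel' (d := d) hg.1.1 hg.2.1.1 hg.2.2
      linear_combination ((N : ℕ) : ℝ)⁻¹ *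
        u (m - Finsupp.single l 1 - Finsupp.single k 1) (insert k (insert l S)) x * hc
    · rw [if_neg hg, if_neg, neg_zero]
      rintro ⟨h1, h2, h3⟩
      exact hg ⟨h2, h1, h3.symm⟩
  have hT : (∑ k : Fin d, ∑ l : Fin d,
      (if (k ∉ S ∧ 1 ≤ m k) ∧ (l ∉ S ∧ 1 ≤ m l) ∧ l ≠ k then
          ((N : ℕ) : ℝ)⁻¹ * sgn d k S * sgn d l (insert k S) *
            u (m - Finsupp.single k 1 - Finsupp.single l 1) (insert l (insert k S)) x
        else 0)) = 0 := by
    set T := ∑ k : Fin d, ∑ l : Fin d,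
      (if (k ∉ S ∧ 1 ≤ m k) ∧ (l ∉ S ∧ 1 ≤ m l) ∧ l ≠ k then
          ((N : ℕ) : ℝ)⁻¹ * sgn d k S * sgn d l (insert k S) *
            u (m - Finsupp.single k 1 - Finsupp.single l 1) (insert l (insert k S)) x
        else 0) with hTdef
    have : T = -T := by
      conv_lhs => rw [hTdef]
      rw [Finset.sum_congr rfl fun k _ => Finset.sum_congr rfl fun l _ => hanti k l]
      rw [Finset.sum_comm]
      simp only [Finset.sum_neg_distrib]
      rfl
    linarith
  rw [hT, mul_zero]
lemma deltaInv_nabla_vact_congr {Γ : Christoffel d} {A : VF1 d} (hlow : LowDegVanish d A)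
    {u v : Omega d} {m : Mi d}
    (h : ∀ m' S', ydeg d m' < ydeg d m → u m' S' = v m' S')
    (S : Finset (Fin d)) (x : Fin d → ℝ) :
    deltaInv d (nablaOp d Γ u + vact d A u) m S x
      = deltaInv d (nablaOp d Γ v + vact d A v) m S x := by
  unfold deltaInv
  congr 1
  refine Finset.sum_congr rfl fun k _ => ?_
  by_cases hg : k ∉ S ∧ 1 ≤ m k
  swap
  · rw [if_neg hg, if_neg hg]
  rw [if_pos hg, if_pos hg]
  congr 1
  have hlt : ydeg d (m - Finsupp.single k 1) < ydeg d m := by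
    have := ydeg_sub_single hg.2; omega
  set m₁ : Mi d := m - Finsupp.single k 1 with hm1
  set T : Finset (Fin d) := insert k S with hT
  simp only [Pi.add_apply]
  congr 1
  · -- nabla part
    unfold nablaOp
    refine Finset.sum_congr rfl fun i _ => ?_
    rw [h m₁ (T.erase i) hlt]
    congr 2
    refine Finset.sum_congr rfl fun j _ => Finset.sum_congr rfl fun kk _ => ?_
    by_cases hj : 1 ≤ m₁ j
    · rw [if_pos hj, if_pos hj]
      have h1 : 1 ≤ (m₁ + Finsupp.single kk 1 : Mi d) j := by
        rw [Finsupp.add_apply]; omega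
      have h2 := ydeg_sub_single h1
      rw [ydeg_add, ydeg_single] at h2
      have hlt2 : ydeg d (m₁ + Finsupp.single kk 1 - Finsupp.single j 1) < ydeg d m := by
        omega
      simp only [h _ _ hlt2]
    · rw [if_neg hj, if_neg hj]
  · -- vact part
    unfold vact
    refine Finset.sum_congr rfl fun kk _ => ?_
    congr 1
    refine Finset.sum_congr rfl fun j _ => Finset.sum_congr rfl fun p hp => ?_
    by_cases hp2 : ydeg d p.1 < 2
    · rw [hlow j kk p.1 hp2]
      simp
    · have hsum : p.1 + p.2 = m₁ := Finset.HasAntidiagonal.mem_antidiagonal.mp hp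
      have hy : ydeg d p.1 + ydeg d p.2 = ydeg d m₁ := by rw [← ydeg_add, hsum]
      have hlt3 : ydeg d (p.2 + Finsupp.single j 1) < ydeg d m := by
        rw [ydeg_add, ydeg_single]
        omega
      rw [h _ _ hlt3]

lemma deltaInv_nabla_vact_zero (Γ : Christoffel d) (A : VF1 d) :
    deltaInv d (nablaOp d Γ (0 : Omega d) + vact d A (0 : Omega d)) = 0 := by
  rw [nablaOp_zero, vact_zero, add_zero, deltaInv_zero]
/-- iterative approximations to the solution of the recursion -/
def Bseq {d : ℕ} (Γ : Christoffel d) (A : VF1 d) (a : Omega d) : ℕ → Omega d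
  | 0 => 0
  | n + 1 => -deltaInv d a +
      deltaInv d (nablaOp d Γ (Bseq Γ A a n) + vact d A (Bseq Γ A a n))

/-- the solution of the recursion `b = -δ⁻¹a + δ⁻¹(∇b + A·b)` -/
def bsol {d : ℕ} (Γ : Christoffel d) (A : VF1 d) (a : Omega d) : Omega d :=
  fun m S => Bseq Γ A a (ydeg d m + 1) m S

lemma Bseq_stab {Γ : Christoffel d} {A : VF1 d} {a : Omega d} (hlow : LowDegVanish d A) :
    ∀ n m S, ydeg d m ≤ n → Bseq Γ A a (n + 1) m S = Bseq Γ A a n m S := by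
  intro n
  induction n with
  | zero =>
    intro m S hm
    have h0 : ydeg d m = 0 := Nat.le_zero.1 hm
    show (-deltaInv d a +
        deltaInv d (nablaOp d Γ (Bseq Γ A a 0) + vact d A (Bseq Γ A a 0))) m S
      = (0 : Omega d) m S
    funext x
    simp only [Pi.add_apply, Pi.neg_apply]
    rw [deltaInv_ydeg_zero h0, deltaInv_ydeg_zero h0]
    simp
  | succ n ih =>
    intro m S hm
    show (-deltaInv d a +
        deltaInv d (nablaOp d Γ (Bseq Γ A a (n + 1)) + vact d A (Bseq Γ A a (n + 1)))) m S
      = (-deltaInv d a +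
        deltaInv d (nablaOp d Γ (Bseq Γ A a n) + vact d A (Bseq Γ A a n))) m S
    funext x
    simp only [Pi.add_apply, Pi.neg_apply]
    congr 1
    exact deltaInv_nabla_vact_congr hlow (fun m' S' hlt => ih m' S' (by omega)) S x

lemma Bseq_stabGe {Γ : Christoffel d} {A : VF1 d} {a : Omega d} (hlow : LowDegVanish d A) :
    ∀ n m S, ydeg d m < n → Bseq Γ A a n m S = bsol Γ A a m S := by
  intro n
  induction n with
  | zero => intro m S h; omega
  | succ n ih =>
    intro m S h
    rcases Nat.lt_or_ge (ydeg d m) n with h' | h'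
    · rw [Bseq_stab hlow n m S (by omega), ih m S h']
    · have hEq : n = ydeg d m := by omega
      subst hEq
      rfl

lemma bsol_fixed {Γ : Christoffel d} {A : VF1 d} {a : Omega d} (hlow : LowDegVanish d A) :
    bsol Γ A a = -deltaInv d a +
      deltaInv d (nablaOp d Γ (bsol Γ A a) + vact d A (bsol Γ A a)) := by
  funext m S x
  have h1 : bsol Γ A a m S x = Bseq Γ A a (ydeg d m + 1) m S x := rfl
  rw [h1]
  show (-deltaInv d a +
      deltaInv d (nablaOp d Γ (Bseq Γ A a (ydeg d m)) + vact d A (Bseq Γ A a (ydeg d m)))) m S x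
    = _
  simp only [Pi.add_apply, Pi.neg_apply]
  congr 1
  exact deltaInv_nabla_vact_congr hlow
    (fun m' S' hlt => Bseq_stabGe hlow (ydeg d m) m' S' hlt) S x

lemma smooth_Bseq {Γ : Christoffel d} (hΓ : SmoothGamma d Γ) {A : VF1 d}
    (hA : SmoothVF1 d A) {a : Omega d} (hsm : Smooth d a) :
    ∀ n, Smooth d (Bseq Γ A a n) := by
  intro n
  induction n with
  | zero => exact fun m S => contDiff_const
  | succ n ih =>
    exact smooth_add (smooth_neg (smooth_deltaInv hsm))
      (smooth_deltaInv (smooth_add (smooth_nablaOp hΓ ih) (smooth_vact hA ih)))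

lemma smooth_bsol {Γ : Christoffel d} (hΓ : SmoothGamma d Γ) {A : VF1 d}
    (hA : SmoothVF1 d A) {a : Omega d} (hsm : Smooth d a) : Smooth d (bsol Γ A a) :=
  fun m S => smooth_Bseq hΓ hA hsm (ydeg d m + 1) m S

lemma extDeg_add {q : ℕ} {u v : Omega d} (hu : ExtDeg d q u) (hv : ExtDeg d q v) :
    ExtDeg d q (u + v) := by
  intro m S hS
  show u m S + v m S = 0
  rw [hu m S hS, hv m S hS, add_zero]

lemma extDeg_neg {q : ℕ} {u : Omega d} (hu : ExtDeg d q u) : ExtDeg d q (-u) := by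
  intro m S hS
  show -(u m S) = 0
  rw [hu m S hS, neg_zero]

lemma extDeg_deltaInv {q : ℕ} (hq : 1 ≤ q) {u : Omega d} (hu : ExtDeg d q u) :
    ExtDeg d (q - 1) (deltaInv d u) := by
  intro m S hS
  funext x
  show deltaInv d u m S x = 0
  unfold deltaInv
  rw [Finset.sum_eq_zero, mul_zero]
  intro k _
  split
  case isTrue hg =>
    have hcard : (insert k S).card ≠ q := by
      rw [Finset.card_insert_of_notMem hg.1]
      omega
    rw [congrFun (hu _ _ hcard) x]
    simp
  case isFalse => rfl

lemma extDeg_nablaOp {q : ℕ} (hq : 1 ≤ q) {Γ : Christoffel d} {u : Omega d}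
    (hu : ExtDeg d (q - 1) u) : ExtDeg d q (nablaOp d Γ u) := by
  intro m S hS
  funext x
  show nablaOp d Γ u m S x = 0
  unfold nablaOp
  rw [Finset.sum_eq_zero]
  intro i hi
  have hcard : (S.erase i).card ≠ q - 1 := by
    rw [Finset.card_erase_of_mem hi]
    have : 1 ≤ S.card := Finset.card_pos.2 ⟨i, hi⟩
    omega
  have hz : ∀ mm : Mi d, u mm (S.erase i) = 0 := fun mm => hu mm _ hcard
  simp [hz, pd_zero]

lemma extDeg_vact {q : ℕ} (hq : 1 ≤ q) {A : VF1 d} {u : Omega d} (hu : ExtDeg d (q - 1) u) :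
    ExtDeg d q (vact d A u) := by
  intro m S hS
  funext x
  show vact d A u m S x = 0
  unfold vact
  rw [Finset.sum_eq_zero]
  intro k hk
  have hcard : (S.erase k).card ≠ q - 1 := by
    rw [Finset.card_erase_of_mem hk]
    have h1 : 1 ≤ S.card := Finset.card_pos.2 ⟨k, hk⟩
    intro h
    exact hS (by omega)
  have hz : ∀ mm : Mi d, u mm (S.erase k) = 0 := fun mm => hu mm _ hcard
  simp [hz]

lemma extDeg_Bseq {q : ℕ} (hq : 1 ≤ q) {Γ : Christoffel d} {A : VF1 d} {a : Omega d}
    (ha : ExtDeg d q a) : ∀ n, ExtDeg d (q - 1) (Bseq Γ A a n) := by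
  intro n
  induction n with
  | zero => exact fun m S _ => rfl
  | succ n ih =>
    exact extDeg_add (extDeg_neg (extDeg_deltaInv hq ha))
      (extDeg_deltaInv hq (extDeg_add (extDeg_nablaOp hq ih) (extDeg_vact hq ih)))

lemma extDeg_bsol {q : ℕ} (hq : 1 ≤ q) {Γ : Christoffel d} {A : VF1 d} {a : Omega d}
    (ha : ExtDeg d q a) : ExtDeg d (q - 1) (bsol Γ A a) :=
  fun m S hS => extDeg_Bseq hq ha (ydeg d m + 1) m S hS

lemma Dfed_empty (Γ : Christoffel d) (A : VF1 d) (u : Omega d) (m : Mi d) (x : Fin d → ℝ) :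
    Dfed d Γ A u m ∅ x = 0 := by
  simp [Dfed, nablaOp, deltaOp, vact]
lemma deltaInv_bsol {Γ : Christoffel d} {A : VF1 d} {a : Omega d} (hlow : LowDegVanish d A) :
    deltaInv d (bsol Γ A a) = 0 := by
  conv_lhs => rw [bsol_fixed hlow]
  rw [deltaInv_add, deltaInv_neg, deltaInv_deltaInv, deltaInv_deltaInv]
  simp

lemma sigma_bsol {Γ : Christoffel d} {A : VF1 d} {a : Omega d} (hlow : LowDegVanish d A) :
    sigmaOm d (bsol Γ A a) = 0 := by
  funext x
  show bsol Γ A a 0 ∅ x = 0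
  conv_lhs => rw [bsol_fixed hlow]
  simp only [Pi.add_apply, Pi.neg_apply]
  rw [deltaInv_zero_empty, deltaInv_zero_empty]
  simp

lemma Dfed_sub (Γ : Christoffel d) (A : VF1 d) {u v : Omega d}
    (hu : ∀ m S, Differentiable ℝ (u m S)) (hv : ∀ m S, Differentiable ℝ (v m S)) :
    Dfed d Γ A (u - v) = Dfed d Γ A u - Dfed d Γ A v := by
  unfold Dfed
  rw [nablaOp_sub Γ hu hv, deltaOp_sub, vact_sub]
  abel

/-- Acyclicity of the Fedosov differential in positive degrees.
If `q ≥ 1` and `a ∈ Ω^q` satisfies `Da = 0`, then there is `b ∈ Ω^{q−1}` with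
`Db = a`; moreover `b` can be taken to be the solution of the recursion
`b = −δ⁻¹a + δ⁻¹(∇b + A·b)`, which satisfies `δ⁻¹b = 0` and `σ(b) = 0`. -/
theorem fedosov_acyclic_positive_degrees (d : ℕ) (hd : 1 ≤ d) (Γ : Christoffel d)
    (hΓ : SmoothGamma d Γ) (hsym : TorsionFree d Γ)
    (A : VF1 d) (hA : SmoothVF1 d A) (hlow : LowDegVanish d A)
    (hdinv : DeltaInvVanish d A) (hnil : Nilpotent d Γ A)
    (q : ℕ) (hq : 1 ≤ q) (a : Omega d) (ha : ExtDeg d q a) (hsm : Smooth d a)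
    (hclosed : Dfed d Γ A a = 0) :
    ∃ b : Omega d, ExtDeg d (q - 1) b ∧ Smooth d b ∧ Dfed d Γ A b = a ∧
      b = -deltaInv d a + deltaInv d (nablaOp d Γ b + vact d A b) ∧
      deltaInv d b = 0 ∧ sigmaOm d b = 0 := by
  classical
  set b : Omega d := bsol Γ A a with hbdef
  have hfix : b = -deltaInv d a + deltaInv d (nablaOp d Γ b + vact d A b) := bsol_fixed hlow
  have hsmb : Smooth d b := smooth_bsol hΓ hA hsm
  have hext : ExtDeg d (q - 1) b := extDeg_bsol hq ha
  have hdb0 : deltaInv d b = 0 := deltaInv_bsol hlow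
  have hsb : sigmaOm d b = 0 := sigma_bsol hlow
  have hsmDb : Smooth d (Dfed d Γ A b) := smooth_Dfed hΓ hA hsmb
  -- δ⁻¹ δ b = b
  have hdd : deltaInv d (deltaOp d b) = b := by
    funext m S x
    by_cases hN : 0 < ydeg d m + S.card
    · have hh := hodge b m S hN x
      rw [hdb0, deltaOp_zero] at hh
      simpa using hh
    · have hm0 : ydeg d m = 0 := by omega
      have hS0 : S = ∅ := Finset.card_eq_zero.1 (by omega)
      subst hS0
      rw [deltaInv_ydeg_zero hm0]
      have hm : m = 0 := by ext k; exact ydeg_eq_zero hm0 k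
      subst hm
      exact (congrFun hsb x).symm
  have hrel : nablaOp d Γ b + vact d A b = Dfed d Γ A b + deltaOp d b := by
    unfold Dfed
    abel
  have hkey : deltaInv d (Dfed d Γ A b) = deltaInv d a := by
    have h1 := hfix
    rw [hrel, deltaInv_add, hdd] at h1
    funext m S x
    have h3 := congrFun (congrFun (congrFun h1 m) S) x
    simp only [Pi.add_apply, Pi.neg_apply] at h3
    linarith
  set c : Omega d := Dfed d Γ A b - a with hcdef
  have hDc : Dfed d Γ A c = 0 := by
    rw [hcdef, Dfed_sub Γ A (smooth_diff hsmDb) (smooth_diff hsm), hnil b hsmb, hclosed,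
      sub_zero]
  have hdic : deltaInv d c = 0 := by rw [hcdef, deltaInv_sub, hkey, sub_self]
  have hdel : deltaOp d c = nablaOp d Γ c + vact d A c := by
    have h0 := hDc
    unfold Dfed at h0
    funext m S x
    have h3 := congrFun (congrFun (congrFun h0 m) S) x
    simp only [Pi.add_apply, Pi.sub_apply, Pi.zero_apply] at h3
    simp only [Pi.add_apply]
    linarith
  have hczero : ∀ m S, c m S = 0 := by
    suffices H : ∀ n m, ydeg d m = n → ∀ S, c m S = 0 by
      intro m S
      exact H _ m rfl S
    intro n
    induction n using Nat.strong_induction_on with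
    | _ n ih =>
      intro m hm S
      funext x
      show c m S x = 0
      by_cases hN : 0 < ydeg d m + S.card
      · have hh := hodge c m S hN x
        rw [hdic, deltaOp_zero] at hh
        have h4 : deltaInv d (deltaOp d c) m S x = c m S x := by simpa using hh
        rw [hdel] at h4
        have h5 := deltaInv_nabla_vact_congr (Γ := Γ) hlow (u := c) (v := 0) (m := m)
          (fun m' S' hlt => ih (ydeg d m') (by omega) m' rfl S') S x
        rw [congrFun (congrFun (congrFun (deltaInv_nabla_vact_zero Γ A) m) S) x] at h5
        rw [h5] at h4
        exact h4.symm
      · have hm0 : ydeg d m = 0 := by omega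
        have hS0 : S = ∅ := Finset.card_eq_zero.1 (by omega)
        subst hS0
        have hmz : m = 0 := by ext k; exact ydeg_eq_zero hm0 k
        subst hmz
        show (Dfed d Γ A b - a) 0 ∅ x = 0
        simp only [Pi.sub_apply]
        rw [Dfed_empty]
        have haz : a 0 ∅ = 0 := ha 0 ∅ (by simp; omega)
        rw [congrFun haz x]
        simp
  have hDb : Dfed d Γ A b = a := by
    funext m S x
    have h6 := congrFun (hczero m S) x
    rw [hcdef] at h6
    simp only [Pi.sub_apply, Pi.zero_apply] at h6
    linarith
  exact ⟨b, hext, hsmb, hDb, hfix, hdb0, hsb⟩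
end FedosovModel
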